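/- Let G be a connected graph whose spanning tree T is a path, with minimum cut value k. Fix a tree edge t, sort the edges covering t by their right endpoint (closest to t first), and let u_1, ..., u_k be the right endpoints of the first k such edges. For 1 ≤ i ≤ k−1, let S_i be the set of tree edges in the subpath between u_i and u_{i+1}. Then for every tree edge t' ∈ S_i: Cut(t,t') = k if and only if Cov(t') = Cov(t) + k − 2i. -/

import Mathlib

/-- In the path-tree model (tree is the path `v_0 - v_1 - ... - v_n`, tree edge `j`
joins `v_{j-1}` and `v_j`), a graph edge `e` with left endpoint `l e` and right
endpoint `r e` covers the tree edge `j` iff it spans it. -/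
def pcovers {E : Type*} (l r : E → ℕ) (e : E) (j : ℕ) : Prop :=
  l e < j ∧ j ≤ r e

/-- `T` is a path, `k` the minimum cut value. Fix a tree edge `τ`; the
edges covering `τ` are sorted by right endpoint, `ui = u_i` and `ui1 = u_{i+1}` being
the `i`-th and `(i+1)`-st sorted right endpoints (so exactly `i` edges covering `τ`
have right endpoint `≤ u_i`, and none has right endpoint strictly between `u_i` and
`u_{i+1}`). Then for every tree edge `j'` in the segment `S_i` between `u_i` and
`u_{i+1}`: `Cut(τ, j') = k` iff `Cov(j') = Cov(τ) + k - 2i`. -/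
theorem stmt_6 {E : Type*} [Fintype E] (l r : E → ℕ) (k i τ ui ui1 : ℕ)
    (hτui : τ ≤ ui) (hui : ui ≤ ui1)
    (h1 : ({e : E | pcovers l r e τ ∧ r e ≤ ui}).ncard = i)
    (h2 : ∀ e : E, pcovers l r e τ → ¬ (ui < r e ∧ r e < ui1))
    (j' : ℕ) (hj'l : ui < j') (hj'r : j' ≤ ui1) :
    ({e : E | Xor' (pcovers l r e τ) (pcovers l r e j')}).ncard = k ↔
      (({e : E | pcovers l r e j'}).ncard : ℤ)
        = (({e : E | pcovers l r e τ}).ncard : ℤ) + (k : ℤ) - 2 * (i : ℤ) := by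
  classical
  set A := {e : E | pcovers l r e τ} with hA
  set B := {e : E | pcovers l r e j'} with hB
  have hAfin : A.Finite := Set.toFinite _
  have hBfin : B.Finite := Set.toFinite _
  -- A splits as (A ∩ B) ∪ {covers τ, r e ≤ ui}, disjointly
  have hsplit : A = (A ∩ B) ∪ {e : E | pcovers l r e τ ∧ r e ≤ ui} := by
    ext e
    simp only [hA, hB, Set.mem_setOf_eq, Set.mem_union, Set.mem_inter_iff, pcovers]
    constructor
    · intro he
      rcases le_or_gt j' (r e) with h | h
      · exact Or.inl ⟨he, by omega, h⟩
      · have := h2 e he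
        exact Or.inr ⟨he, by omega⟩
    · rintro (⟨he, _⟩ | ⟨he, _⟩) <;> exact he
  have hdisj : Disjoint (A ∩ B) {e : E | pcovers l r e τ ∧ r e ≤ ui} := by
    rw [Set.disjoint_left]
    rintro e ⟨-, heB⟩ ⟨-, hle⟩
    simp only [hB, Set.mem_setOf_eq, pcovers] at heB
    omega
  have hcardA : A.ncard = (A ∩ B).ncard + i := by
    conv_lhs => rw [hsplit]
    rw [Set.ncard_union_eq hdisj (hAfin.inter_of_left _) (Set.toFinite _), h1]
  -- The Xor set is (A ∪ B) \ (A ∩ B)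
  have hxor : {e : E | Xor' (pcovers l r e τ) (pcovers l r e j')}
      = (A ∪ B) \ (A ∩ B) := by
    ext e
    simp only [hA, hB, Set.mem_setOf_eq, Set.mem_diff, Set.mem_union, Set.mem_inter_iff,
      Xor', Xor]
    tauto
  have hsub : A ∩ B ⊆ A ∪ B := fun e he => Or.inl he.1
  have hcardxor : ((A ∪ B) \ (A ∩ B)).ncard + (A ∩ B).ncard = (A ∪ B).ncard := by
    rw [Set.ncard_diff hsub (hAfin.inter_of_left _)]
    have : (A ∩ B).ncard ≤ (A ∪ B).ncard :=
      Set.ncard_le_ncard hsub (hAfin.union hBfin)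
    omega
  have hunion : (A ∪ B).ncard + (A ∩ B).ncard = A.ncard + B.ncard :=
    Set.ncard_union_add_ncard_inter A B hAfin hBfin
  rw [hxor]
  omega
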